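/- Let n, r, m be integers with 1 < r < n and 2 ≤ m ≤ r, and let λ₁,…,λ_r be positive integers with λ₁ + ⋯ + λ_r = n. Then: (i) for every subset I ⊆ {1,…,r} with |I| = m, one has ∏_{i∈I} λ_i ≤ m^{n−r}; and (ii) Σ_{I ⊆ {1,…,r}, |I| = m} ∏_{i∈I} λ_i ≤ m^{n−r}·S(r,m), where S(r,m) is the Stirling number of the second kind (the number of partitions of an r-element set into m nonempty blocks). In particular (the case m = r), λ₁⋯λ_r ≤ r^{n−r}. -/

import Mathlib

/-- Stirling numbers of the second kind: `stirl r m` is the number of partitions of an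
`r`-element set into `m` nonempty blocks (standard recurrence). -/
def stirl : ℕ → ℕ → ℕ
  | 0, 0 => 1
  | 0, _ + 1 => 0
  | _ + 1, 0 => 0
  | r + 1, m + 1 => (m + 1) * stirl r (m + 1) + stirl r m

lemma stirl_zero (r : ℕ) : stirl (r+1) 0 = 0 := rfl

lemma stirl_one : ∀ r, stirl (r+1) 1 = 1 := by
  intro r
  induction r with
  | zero => rfl
  | succ n ih =>
    show 1 * stirl (n+1) 1 + stirl (n+1) 0 = 1
    simp [ih, stirl_zero]

lemma stirl_two_ge : ∀ r, r ≤ stirl (r+1) 2 := by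
  intro r
  induction r with
  | zero => exact Nat.zero_le _
  | succ n ih =>
    have h : stirl (n+1+1) 2 = 2 * stirl (n+1) 2 + stirl (n+1) 1 := rfl
    have h1 := stirl_one n
    omega

lemma choose_le_stirl : ∀ r m, 2 ≤ m → Nat.choose r m ≤ stirl r m := by
  intro r
  induction r with
  | zero =>
    intro m hm
    rw [Nat.choose_eq_zero_of_lt (by omega)]
    exact Nat.zero_le _
  | succ r ih =>
    intro m hm
    obtain ⟨k, rfl⟩ : ∃ k, m = k + 1 := ⟨m - 1, by omega⟩
    have hst : stirl (r+1) (k+1) = (k+1) * stirl r (k+1) + stirl r k := rfl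
    rw [hst, Nat.choose_succ_succ]
    rcases Nat.lt_or_ge k 2 with hk | hk
    · have hk1 : k = 1 := by omega
      subst hk1
      rcases r with _ | s
      · simp [stirl]
      · have h1 : stirl (s+1) 1 = 1 := stirl_one s
        have h2 : s ≤ stirl (s+1) 2 := stirl_two_ge s
        have h3 : Nat.choose (s+1) 2 ≤ stirl (s+1) 2 := ih 2 le_rfl
        have h4 : Nat.choose (s+1) 1 = s+1 := Nat.choose_one_right _
        simp only [Nat.succ_eq_add_one, Nat.reduceAdd] at h1 h2 h3 h4 ⊢
        omega
    · have h1 := ih k hk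
      have h2 := ih (k+1) (by omega)
      have h3 : stirl r (k+1) ≤ (k+1) * stirl r (k+1) :=
        Nat.le_mul_of_pos_left _ (by omega)
      simp only [Nat.succ_eq_add_one] at h1 h2 h3 ⊢
      omega

theorem stmt_15 (n r m : ℕ) (h1r : 1 < r) (hrn : r < n) (h2m : 2 ≤ m) (hmr : m ≤ r)
    (lam : Fin r → ℕ) (hpos : ∀ i, 1 ≤ lam i) (hsum : ∑ i, lam i = n) :
    -- (i)
    (∀ I : Finset (Fin r), I.card = m → ∏ i ∈ I, lam i ≤ m ^ (n - r)) ∧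
    -- (ii)
    (∑ I ∈ Finset.powersetCard m (Finset.univ : Finset (Fin r)), ∏ i ∈ I, lam i ≤
      m ^ (n - r) * stirl r m) ∧
    -- the case m = r
    (∏ i, lam i ≤ r ^ (n - r)) := by
  have hr2 : 2 ≤ r := h1r
  have hsum' : ∑ i, (lam i - 1) = n - r := by
    have h : ∑ i : Fin r, lam i = ∑ i : Fin r, ((lam i - 1) + 1) := by
      apply Finset.sum_congr rfl
      intro i _
      have := hpos i
      omega
    rw [Finset.sum_add_distrib] at h
    simp only [Finset.sum_const, Finset.card_univ, Fintype.card_fin, smul_eq_mul, mul_one] at h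
    omega
  have key : ∀ (k : ℕ), 2 ≤ k → ∀ I : Finset (Fin r), ∏ i ∈ I, lam i ≤ k ^ (n - r) := by
    intro k hk I
    calc ∏ i ∈ I, lam i ≤ ∏ i ∈ I, k ^ (lam i - 1) := by
          apply Finset.prod_le_prod (fun i _ => Nat.zero_le _)
          intro i _
          have h2 : lam i - 1 < 2 ^ (lam i - 1) := Nat.lt_two_pow_self
          have h3 : lam i ≤ 2 ^ (lam i - 1) := by have := hpos i; omega
          exact h3.trans (Nat.pow_le_pow_left hk _)
      _ = k ^ (∑ i ∈ I, (lam i - 1)) := Finset.prod_pow_eq_pow_sum _ _ _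
      _ ≤ k ^ (n - r) := by
          apply Nat.pow_le_pow_right (by omega)
          rw [← hsum']
          exact Finset.sum_le_sum_of_subset (Finset.subset_univ I)
  refine ⟨fun I _ => key m h2m I, ?_, key r hr2 Finset.univ⟩
  calc ∑ I ∈ Finset.powersetCard m (Finset.univ : Finset (Fin r)), ∏ i ∈ I, lam i
      ≤ ∑ I ∈ Finset.powersetCard m (Finset.univ : Finset (Fin r)), m ^ (n - r) :=
        Finset.sum_le_sum (fun I _ => key m h2m I)
    _ = (Nat.choose r m) * m ^ (n - r) := by
        rw [Finset.sum_const, Finset.card_powersetCard, Finset.card_univ, Fintype.card_fin,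
          smul_eq_mul]
    _ ≤ m ^ (n - r) * stirl r m := by
        rw [mul_comm]
        exact Nat.mul_le_mul_left _ (choose_le_stirl r m h2m)
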